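/- Let R be a commutative integral domain, t,s units of R, c₀ ∈ R, and define a*b = t·a + s·b + c₀ for a,b ∈ R. Then the identity D24, namely x*((y*z)*x) = (x*(y*z))*x for all x,y,z ∈ R, holds if and only if either t = s (with no restriction on c₀), or t + s = 1 and c₀ = 0. -/
import Mathlib


/-- The affine operation `a * b = t·a + s·b + c₀` on a commutative integral domain. -/
def affOp {R : Type*} [CommRing R] (t s c₀ : R) (a b : R) : R := t * a + s * b + c₀

/-- An affine quasigroup over an integral domain satisfies the identity D24,
`x((yz)x) = (x(yz))x`, iff either `t = s` (with `c₀` arbitrary), or `t + s = 1` and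
`c₀ = 0` (the Alexander solution). -/
theorem affine_D24_iff {R : Type*} [CommRing R] [IsDomain R]
    (t s c₀ : R) (ht : IsUnit t) (hs : IsUnit s) :
    (∀ x y z : R,
        affOp t s c₀ x (affOp t s c₀ (affOp t s c₀ y z) x) =
          affOp t s c₀ (affOp t s c₀ x (affOp t s c₀ y z)) x) ↔
      (t = s ∨ (t + s = 1 ∧ c₀ = 0)) := by
  constructor
  · intro h
    by_cases hts : t = s
    · exact Or.inl hts
    · right
      have hts' : t - s ≠ 0 := sub_ne_zero.mpr hts
      have key : ∀ x : R, (t - s) * ((1 - t - s) * x - c₀) = 0 := by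
        intro x
        have hx := h x 0 0
        simp only [affOp] at hx
        linear_combination hx
      have hc : c₀ = 0 := by
        have h0 := key 0
        rcases mul_eq_zero.mp h0 with h' | h'
        · exact absurd h' hts'
        · linear_combination -h'
      have h1 := key 1
      rcases mul_eq_zero.mp h1 with h' | h'
      · exact absurd h' hts'
      · refine ⟨?_, hc⟩
        linear_combination -h' - hc
  · rintro (h | ⟨h1, h2⟩) x y z <;> simp only [affOp]
    · subst h; ring
    · linear_combination (s - t) * x * h1 + (s - t) * h2
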